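/- Let N̂, D̂ be random variables with D̂ ≠ 0 a.s., let N, D be real numbers with D > 0, and let α ∈ [0,1]. Suppose R̂ = N̂/D̂ satisfies |R̂| ≤ M a.s. for some constant M. Then a.s., D·|R̂ - N/D| ≤ |N̂ - N| + (|N̂|/D)·|D̂ - D| + M·|D̂ - D|^{1+α}/D^α. -/

import Mathlib

open MeasureTheory

theorem ratio_pointwise_bound {Ω : Type*} [MeasurableSpace Ω] (μ : Measure Ω)
    [IsProbabilityMeasure μ] (Nhat Dhat : Ω → ℝ) (N D M α : ℝ)
    (hD : 0 < D) (hα : α ∈ Set.Icc (0:ℝ) 1)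
    (hDhat : ∀ᵐ ω ∂μ, Dhat ω ≠ 0)
    (hM : ∀ᵐ ω ∂μ, |Nhat ω / Dhat ω| ≤ M) :
    ∀ᵐ ω ∂μ, D * |Nhat ω / Dhat ω - N / D| ≤
      |Nhat ω - N| + (|Nhat ω| / D) * |Dhat ω - D|
        + M * |Dhat ω - D| ^ (1 + α) / D ^ α := by
  obtain ⟨hα0, hα1⟩ := hα
  filter_upwards [hDhat, hM] with ω hDω hMω
  set R := Nhat ω / Dhat ω with hR
  set t := |Dhat ω - D| with ht
  have ht0 : 0 ≤ t := abs_nonneg _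
  have hM0 : 0 ≤ M := le_trans (abs_nonneg _) hMω
  have hDne : D ≠ 0 := ne_of_gt hD
  have hDa : (0:ℝ) < D ^ α := Real.rpow_pos_of_pos hD α
  have habs : |D - Dhat ω| = t := by rw [ht, abs_sub_comm]
  rcases le_or_gt t D with hcase | hcase
  · -- |D̂ - D| ≤ D
    have hid : R - N / D = (Nhat ω - N) / D + Nhat ω * (D - Dhat ω) / D ^ 2
        + R * (D - Dhat ω) ^ 2 / (D ^ 2) := by
      rw [hR]; field_simp; ring
    have h1 : D * |R - N / D| ≤ |Nhat ω - N| + (|Nhat ω| / D) * t + M * t ^ 2 / D := by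
      rw [hid]
      have htri : |(Nhat ω - N) / D + Nhat ω * (D - Dhat ω) / D ^ 2
          + R * (D - Dhat ω) ^ 2 / (D ^ 2)| ≤ |(Nhat ω - N) / D|
          + |Nhat ω * (D - Dhat ω) / D ^ 2| + |R * (D - Dhat ω) ^ 2 / (D ^ 2)| :=
        (abs_add_le _ _).trans (by gcongr; exact abs_add_le _ _)
      have e1 : |(Nhat ω - N) / D| = |Nhat ω - N| / D := by
        rw [abs_div, abs_of_pos hD]
      have e2 : |Nhat ω * (D - Dhat ω) / D ^ 2| = |Nhat ω| * t / D ^ 2 := by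
        rw [abs_div, abs_mul, habs, abs_of_pos (by positivity : (0:ℝ) < D ^ 2)]
      have e3 : |R * (D - Dhat ω) ^ 2 / (D ^ 2)| ≤ M * t ^ 2 / D ^ 2 := by
        rw [abs_div, abs_mul, abs_of_pos (by positivity : (0:ℝ) < D ^ 2), abs_pow, habs]
        gcongr
      calc D * |(Nhat ω - N) / D + Nhat ω * (D - Dhat ω) / D ^ 2
            + R * (D - Dhat ω) ^ 2 / (D ^ 2)|
          ≤ D * (|Nhat ω - N| / D + |Nhat ω| * t / D ^ 2 + M * t ^ 2 / D ^ 2) := by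
            rw [e1, e2] at htri
            exact mul_le_mul_of_nonneg_left (htri.trans (by linarith)) hD.le
        _ = |Nhat ω - N| + (|Nhat ω| / D) * t + M * t ^ 2 / D := by field_simp
    refine h1.trans ?_
    have hkey : M * t ^ 2 / D ≤ M * t ^ (1 + α) / D ^ α := by
      rcases eq_or_lt_of_le ht0 with h0 | h0
      · rw [← h0]
        simp [Real.zero_rpow (by positivity : (1:ℝ) + α ≠ 0)]
      · have e : t ^ (2:ℕ) = t ^ (1 + α) * t ^ (1 - α) := by
          rw [← Real.rpow_add h0, ← Real.rpow_natCast t 2]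
          norm_num
        have h2 : t ^ (1 - α) ≤ D / D ^ α := by
          have e2 : D ^ (1 - α) = D / D ^ α := by
            rw [Real.rpow_sub hD, Real.rpow_one]
          rw [← e2]
          exact Real.rpow_le_rpow ht0 hcase (by linarith)
        calc M * t ^ 2 / D = M * (t ^ (1 + α) * t ^ (1 - α)) / D := by rw [← e]
          _ ≤ M * (t ^ (1 + α) * (D / D ^ α)) / D := by gcongr
          _ = M * t ^ (1 + α) / D ^ α := by field_simp
    linarith
  · -- |D̂ - D| > D
    have hid : R - N / D = (Nhat ω - N) / D + R * (D - Dhat ω) / D := by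
      rw [hR]; field_simp; ring
    have h1 : D * |R - N / D| ≤ |Nhat ω - N| + M * t := by
      rw [hid]
      have htri := abs_add_le ((Nhat ω - N) / D) (R * (D - Dhat ω) / D)
      have e1 : |(Nhat ω - N) / D| = |Nhat ω - N| / D := by
        rw [abs_div, abs_of_pos hD]
      have e2 : |R * (D - Dhat ω) / D| ≤ M * t / D := by
        rw [abs_div, abs_mul, habs, abs_of_pos hD]
        gcongr
      calc D * |(Nhat ω - N) / D + R * (D - Dhat ω) / D|
          ≤ D * (|Nhat ω - N| / D + M * t / D) := by
            rw [e1] at htri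
            exact mul_le_mul_of_nonneg_left (htri.trans (by gcongr)) hD.le
        _ = |Nhat ω - N| + M * t := by field_simp
    have h2 : M * t ≤ M * t ^ (1 + α) / D ^ α := by
      have ht' : 0 < t := hD.trans hcase
      have e : t ^ (1 + α) = t * t ^ α := by
        rw [Real.rpow_add ht', Real.rpow_one]
      have h3 : D ^ α ≤ t ^ α := Real.rpow_le_rpow hD.le hcase.le hα0
      rw [le_div_iff₀ hDa, e]
      calc M * t * D ^ α ≤ M * t * t ^ α := by gcongr
        _ = M * (t * t ^ α) := by ring

    have : D * |R - N / D| ≤ |Nhat ω - N| + M * t ^ (1 + α) / D ^ α :=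
      h1.trans (by linarith)
    refine this.trans ?_
    have : 0 ≤ (|Nhat ω| / D) * t := by positivity
    linarith
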